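/- Let T ∈ M_n(ℂ) be positive definite. Then for every S ∈ M_n(ℂ) there exists exactly one X ∈ M_n(ℂ) satisfying ∫₀¹ T^s X T^{1−s} ds = S, this X satisfies tr(T·X) = tr(S), and if S is Hermitian then X is Hermitian. -/

import Mathlib

open Matrix MeasureTheory
open scoped ComplexOrder

attribute [local instance] Matrix.frobeniusNormedAddCommGroup Matrix.frobeniusNormedSpace

/-- Functional calculus for a matrix: apply `f : ℝ → ℝ` to a Hermitian matrix `A` via its
spectral decomposition (junk value `0` if `A` is not Hermitian). -/
noncomputable def hcfc {n : ℕ} (f : ℝ → ℝ) (A : Matrix (Fin n) (Fin n) ℂ) :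
    Matrix (Fin n) (Fin n) ℂ :=
  if hA : A.IsHermitian then
    (hA.eigenvectorUnitary : Matrix (Fin n) (Fin n) ℂ) *
      Matrix.diagonal (fun i => (f (hA.eigenvalues i) : ℂ)) *
      star (hA.eigenvectorUnitary : Matrix (Fin n) (Fin n) ℂ)
  else 0

/-- The power `T^s` of a positive (semi)definite matrix via functional calculus. -/
noncomputable def psdPow {n : ℕ} (T : Matrix (Fin n) (Fin n) ℂ) (s : ℝ) :
    Matrix (Fin n) (Fin n) ℂ :=
  hcfc (fun x => x ^ s) T

section aux
variable {n : ℕ}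

/-- Entry evaluation as a continuous linear map. -/
noncomputable def entryCLM (i j : Fin n) : Matrix (Fin n) (Fin n) ℂ →L[ℂ] ℂ :=
  LinearMap.toContinuousLinearMap
    { toFun := fun Z => Z i j
      map_add' := by intros; rfl
      map_smul' := by intros; rfl }

@[simp] lemma entryCLM_apply (i j : Fin n) (Z : Matrix (Fin n) (Fin n) ℂ) :
    entryCLM i j Z = Z i j := rfl

/-- Conjugation `Z ↦ U * Z * V` as a continuous linear map. -/
noncomputable def conjCLM (U V : Matrix (Fin n) (Fin n) ℂ) :
    Matrix (Fin n) (Fin n) ℂ →L[ℂ] Matrix (Fin n) (Fin n) ℂ :=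
  LinearMap.toContinuousLinearMap
    { toFun := fun Z => U * Z * V
      map_add' := by intros; noncomm_ring
      map_smul' := by intros; simp [Matrix.mul_smul, Matrix.smul_mul] }

@[simp] lemma conjCLM_apply (U V Z : Matrix (Fin n) (Fin n) ℂ) :
    conjCLM U V Z = U * Z * V := rfl

lemma psdPow_eq {T : Matrix (Fin n) (Fin n) ℂ} (hT : T.PosDef) (s : ℝ) :
    psdPow T s = (hT.1.eigenvectorUnitary : Matrix (Fin n) (Fin n) ℂ) *
      Matrix.diagonal (fun i => ((hT.1.eigenvalues i ^ s : ℝ) : ℂ)) *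
      star (hT.1.eigenvectorUnitary : Matrix (Fin n) (Fin n) ℂ) := by
  rw [psdPow, hcfc, dif_pos hT.1]

end aux

/-- For a positive definite matrix `T`, the integral equation `∫₀¹ T^s X T^{1−s} ds = S` has a
unique solution `X` for every `S`; this solution satisfies `tr(T·X) = tr(S)`, and it is
Hermitian whenever `S` is Hermitian. -/
theorem integral_equation_unique_solution {n : ℕ} (T : Matrix (Fin n) (Fin n) ℂ)
    (hT : T.PosDef) (S : Matrix (Fin n) (Fin n) ℂ) :
    (∃! X : Matrix (Fin n) (Fin n) ℂ,
        (∫ s in Set.Icc (0:ℝ) 1, psdPow T s * X * psdPow T (1 - s)) = S) ∧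
      ∀ X : Matrix (Fin n) (Fin n) ℂ,
        (∫ s in Set.Icc (0:ℝ) 1, psdPow T s * X * psdPow T (1 - s)) = S →
          (Matrix.trace (T * X) = Matrix.trace S ∧ (S.IsHermitian → X.IsHermitian)) := by
  have hH : T.IsHermitian := hT.1
  set U : Matrix (Fin n) (Fin n) ℂ := (hH.eigenvectorUnitary : Matrix (Fin n) (Fin n) ℂ)
    with hUdef
  set ev : Fin n → ℝ := hH.eigenvalues with hevdef
  have hevpos : ∀ i, 0 < ev i := fun i => hT.eigenvalues_pos i
  have hU1 : star U * U = 1 := Matrix.mem_unitaryGroup_iff'.mp hH.eigenvectorUnitary.2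
  have hU2 : U * star U = 1 := Matrix.mem_unitaryGroup_iff.mp hH.eigenvectorUnitary.2
  -- the coefficients
  set c : Fin n → Fin n → ℝ := fun i j => ∫ s in (0:ℝ)..1, ev i ^ s * ev j ^ (1 - s) with hcdef
  have hbcont : ∀ a : ℝ, 0 < a → Continuous fun s : ℝ => a ^ s := fun a ha =>
    continuous_iff_continuousAt.2 fun _ => Real.continuousAt_const_rpow ha.ne'
  have hcont : ∀ i j : Fin n, Continuous fun s : ℝ => ev i ^ s * ev j ^ (1 - s) := fun i j =>
    (hbcont _ (hevpos i)).mul ((hbcont _ (hevpos j)).comp (continuous_const.sub continuous_id))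
  have hcpos : ∀ i j, 0 < c i j := by
    intro i j
    refine intervalIntegral.intervalIntegral_pos_of_pos
      ((hcont i j).intervalIntegrable 0 1) (fun s => ?_) one_pos
    exact mul_pos (Real.rpow_pos_of_pos (hevpos i) _) (Real.rpow_pos_of_pos (hevpos j) _)
  have hcne : ∀ i j, (c i j : ℂ) ≠ 0 := fun i j =>
    Complex.ofReal_ne_zero.2 (hcpos i j).ne'
  have hcsymm : ∀ i j, c i j = c j i := by
    intro i j
    have h := intervalIntegral.integral_comp_sub_left (a := (0:ℝ)) (b := 1)
      (fun s : ℝ => ev j ^ s * ev i ^ (1 - s)) 1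
    simp only [sub_sub_cancel, sub_zero, sub_self] at h
    have hmc : (fun s : ℝ => ev i ^ s * ev j ^ (1 - s))
        = fun s : ℝ => ev j ^ (1 - s) * ev i ^ s := by
      funext s; exact mul_comm _ _
    calc c i j = ∫ s in (0:ℝ)..1, ev j ^ (1 - s) * ev i ^ s := by
          show (∫ s in (0:ℝ)..1, ev i ^ s * ev j ^ (1 - s))
            = ∫ s in (0:ℝ)..1, ev j ^ (1 - s) * ev i ^ s
          rw [hmc]
      _ = ∫ s in (0:ℝ)..1, ev j ^ s * ev i ^ (1 - s) := h
      _ = c j i := rfl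
  have hcii : ∀ i, c i i = ev i := by
    intro i
    have : ∀ s : ℝ, ev i ^ s * ev i ^ (1 - s) = ev i := by
      intro s
      rw [← Real.rpow_add (hevpos i), add_sub_cancel, Real.rpow_one]
    simp only [hcdef, this, intervalIntegral.integral_const, sub_zero, one_smul]
  -- cancellation lemmas
  have cancel1 : ∀ Z : Matrix (Fin n) (Fin n) ℂ, star U * (U * Z * star U) * U = Z := by
    intro Z
    calc star U * (U * Z * star U) * U = (star U * U) * Z * (star U * U) := by
          simp only [Matrix.mul_assoc]
      _ = Z := by rw [hU1, Matrix.one_mul, Matrix.mul_one]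
  have cancel2 : ∀ Z : Matrix (Fin n) (Fin n) ℂ, U * (star U * Z * U) * star U = Z := by
    intro Z
    calc U * (star U * Z * U) * star U = (U * star U) * Z * (U * star U) := by
          simp only [Matrix.mul_assoc]
      _ = Z := by rw [hU2, Matrix.one_mul, Matrix.mul_one]
  -- the key computation of the integral
  have keyInt : ∀ X : Matrix (Fin n) (Fin n) ℂ,
      (∫ s in Set.Icc (0:ℝ) 1, psdPow T s * X * psdPow T (1 - s))
        = U * (Matrix.of fun i j => (c i j : ℂ) * (star U * X * U) i j) * star U := by
    intro X
    set Y : Matrix (Fin n) (Fin n) ℂ := star U * X * U with hYdef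
    set G : ℝ → Matrix (Fin n) (Fin n) ℂ :=
      fun s => Matrix.of fun i j => ((ev i ^ s * ev j ^ (1 - s) : ℝ) : ℂ) * Y i j with hGdef
    have hGcont : Continuous G := by
      apply continuous_matrix
      intro i j
      exact (Complex.continuous_ofReal.comp (hcont i j)).mul continuous_const
    letI : ContinuousENorm (Matrix (Fin n) (Fin n) ℂ) := SeminormedAddGroup.toContinuousENorm
    have hGint : IntegrableOn G (Set.Icc (0:ℝ) 1) := hGcont.integrableOn_Icc
    have hint_eq : ∀ s : ℝ, psdPow T s * X * psdPow T (1 - s) = U * G s * star U := by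
      intro s
      rw [psdPow_eq hT, psdPow_eq hT]
      have hD : Matrix.diagonal (fun i => ((ev i ^ s : ℝ) : ℂ)) * Y *
          Matrix.diagonal (fun i => ((ev i ^ (1 - s) : ℝ) : ℂ)) = G s := by
        ext i j
        simp only [hGdef, Matrix.of_apply, Matrix.mul_diagonal, Matrix.diagonal_mul]
        push_cast
        ring
      calc (U * Matrix.diagonal (fun i => ((ev i ^ s : ℝ) : ℂ)) * star U) * X *
            (U * Matrix.diagonal (fun i => ((ev i ^ (1 - s) : ℝ) : ℂ)) * star U)
          = U * (Matrix.diagonal (fun i => ((ev i ^ s : ℝ) : ℂ)) * (star U * X * U) *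
              Matrix.diagonal (fun i => ((ev i ^ (1 - s) : ℝ) : ℂ))) * star U := by
            simp only [Matrix.mul_assoc]
        _ = U * G s * star U := by rw [← hYdef, hD]
    have hGint_eq : (∫ s in Set.Icc (0:ℝ) 1, G s)
        = Matrix.of fun i j => (c i j : ℂ) * Y i j := by
      ext i j
      have h1 : (∫ s in Set.Icc (0:ℝ) 1, G s) i j
          = ∫ s in Set.Icc (0:ℝ) 1, (G s) i j :=
        (ContinuousLinearMap.integral_comp_comm (entryCLM i j) hGint).symm
      rw [h1]
      simp only [hGdef, Matrix.of_apply]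
      rw [show (∫ s in Set.Icc (0:ℝ) 1, ((ev i ^ s * ev j ^ (1 - s) : ℝ) : ℂ) * Y i j)
          = (∫ s in Set.Icc (0:ℝ) 1, ((ev i ^ s * ev j ^ (1 - s) : ℝ) : ℂ)) • Y i j by
        simp_rw [← smul_eq_mul]; exact integral_smul_const _ _]
      rw [show (∫ s in Set.Icc (0:ℝ) 1, ((ev i ^ s * ev j ^ (1 - s) : ℝ) : ℂ))
          = ((∫ s in Set.Icc (0:ℝ) 1, ev i ^ s * ev j ^ (1 - s) : ℝ) : ℂ) from
        integral_ofReal]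
      rw [show (∫ s in Set.Icc (0:ℝ) 1, ev i ^ s * ev j ^ (1 - s)) = c i j by
        rw [hcdef]
        rw [MeasureTheory.integral_Icc_eq_integral_Ioc,
          ← intervalIntegral.integral_of_le (zero_le_one)]]
      simp [smul_eq_mul]
    calc (∫ s in Set.Icc (0:ℝ) 1, psdPow T s * X * psdPow T (1 - s))
        = ∫ s in Set.Icc (0:ℝ) 1, conjCLM U (star U) (G s) := by
          simp_rw [hint_eq]; rfl
      _ = conjCLM U (star U) (∫ s in Set.Icc (0:ℝ) 1, G s) :=
          ContinuousLinearMap.integral_comp_comm _ hGint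
      _ = U * (Matrix.of fun i j => (c i j : ℂ) * Y i j) * star U := by
          rw [hGint_eq]; rfl
  -- the explicit solution
  set Z : Matrix (Fin n) (Fin n) ℂ :=
    Matrix.of (fun i j => (star U * S * U) i j / (c i j : ℂ)) with hZdef
  set X₀ : Matrix (Fin n) (Fin n) ℂ := U * Z * star U with hX0def
  have hX0solves : (∫ s in Set.Icc (0:ℝ) 1, psdPow T s * X₀ * psdPow T (1 - s)) = S := by
    rw [keyInt X₀, hX0def, cancel1]
    have : (Matrix.of fun i j => (c i j : ℂ) * Z i j) = star U * S * U := by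
      ext i j
      simp only [Matrix.of_apply, hZdef]
      rw [mul_comm, div_mul_cancel₀ _ (hcne i j)]
    rw [this, cancel2]
  have huniq : ∀ X : Matrix (Fin n) (Fin n) ℂ,
      (∫ s in Set.Icc (0:ℝ) 1, psdPow T s * X * psdPow T (1 - s)) = S → X = X₀ := by
    intro X hX
    rw [keyInt X] at hX
    rw [hX0solves.symm, keyInt X₀] at hX
    have hM : (Matrix.of fun i j => (c i j : ℂ) * (star U * X * U) i j)
        = (Matrix.of fun i j => (c i j : ℂ) * (star U * X₀ * U) i j) := by
      have := congrArg (fun W => star U * W * U) hX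
      simpa only [cancel1] using this
    have hY : star U * X * U = star U * X₀ * U := by
      ext i j
      have := congrFun (congrFun hM i) j
      simp only [Matrix.of_apply] at this
      exact mul_left_cancel₀ (hcne i j) this
    calc X = U * (star U * X * U) * star U := (cancel2 X).symm
      _ = U * (star U * X₀ * U) * star U := by rw [hY]
      _ = X₀ := cancel2 X₀
  -- trace of the solution
  have hTspec : T = U * Matrix.diagonal (fun i => ((ev i : ℝ) : ℂ)) * star U := by
    exact hH.spectral_theorem
  have htrace : Matrix.trace (T * X₀) = Matrix.trace S := by
    rw [hTspec, hX0def]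
    have h1 : (U * Matrix.diagonal (fun i => ((ev i : ℝ) : ℂ)) * star U) * (U * Z * star U)
        = U * (Matrix.diagonal (fun i => ((ev i : ℝ) : ℂ)) * Z) * star U := by
      calc (U * Matrix.diagonal (fun i => ((ev i : ℝ) : ℂ)) * star U) * (U * Z * star U)
          = U * Matrix.diagonal (fun i => ((ev i : ℝ) : ℂ)) * ((star U * U) * Z) * star U := by
            simp only [Matrix.mul_assoc]
        _ = _ := by rw [hU1, Matrix.one_mul]; simp only [Matrix.mul_assoc]
    rw [h1, Matrix.trace_mul_cycle, hU1, Matrix.one_mul]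
    have h2 : Matrix.trace (Matrix.diagonal (fun i => ((ev i : ℝ) : ℂ)) * Z)
        = Matrix.trace (star U * S * U) := by
      rw [Matrix.trace, Matrix.trace]
      apply Finset.sum_congr rfl
      intro i _
      simp only [Matrix.diag_apply, Matrix.diagonal_mul, hZdef, Matrix.of_apply, hcii i]
      rw [mul_comm ((ev i : ℝ) : ℂ), div_mul_cancel₀ _ (Complex.ofReal_ne_zero.2 (hevpos i).ne')]
    rw [h2, Matrix.trace_mul_cycle, hU2, Matrix.one_mul]
  -- hermitian-ness of the solution
  have hherm : S.IsHermitian → X₀.IsHermitian := by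
    intro hS
    have hSU : star (star U * S * U) = star U * S * U := by
      simp only [StarMul.star_mul, star_star, Matrix.mul_assoc]
      rw [show star S = S from hS.eq]
    have hZh : Zᴴ = Z := by
      ext i j
      simp only [Matrix.conjTranspose_apply, hZdef, Matrix.of_apply]
      rw [star_div₀]
      have h3 : star ((star U * S * U) j i) = (star U * S * U) i j := by
        have h4 := congrFun (congrFun hSU i) j
        rwa [Matrix.star_apply] at h4
      rw [h3, show star ((c j i : ℝ) : ℂ) = ((c j i : ℝ) : ℂ) from by
        simp [Complex.star_def, Complex.conj_ofReal], hcsymm j i]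
    show X₀ᴴ = X₀
    rw [hX0def, Matrix.conjTranspose_mul, Matrix.conjTranspose_mul]
    rw [show (star U)ᴴ = U from by simp [Matrix.star_eq_conjTranspose],
      show Uᴴ = star U from rfl, hZh]
    simp only [Matrix.mul_assoc]
  refine ⟨⟨X₀, hX0solves, huniq⟩, fun X hX => ?_⟩
  rw [huniq X hX]
  exact ⟨htrace, hherm⟩
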